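/- The map φ sending a standard balanced tableau R on D(w) with ℓ cells to the filling of D(w⁻¹) obtained by transposing R and replacing each entry i by ℓ − i + 1 is a well-defined bijection from the set of standard balanced tableaux on D(w) to those on D(w⁻¹), and φ² = id. -/
import Mathlib

/-- The Coxeter length of `w`: the number of inversion pairs. -/
def invCount {n : ℕ} (w : Equiv.Perm (Fin n)) : ℕ :=
  (Finset.univ.filter fun p : Fin n × Fin n => p.1 < p.2 ∧ w p.2 < w p.1).card

/-- The Rothe diagram of `w` (0-indexed): the cells `(i, w j)` for inversions `i < j`,
`w j < w i`, as a subset of `ℕ × ℕ` (first coordinate the row, drawn with row `0` at the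
bottom so that "above" means larger first coordinate; second coordinate the column). -/
def RotheD (n : ℕ) (w : Equiv.Perm (Fin n)) : Finset (ℕ × ℕ) :=
  (Finset.univ.filter fun p : Fin n × Fin n => p.1 < p.2 ∧ w p.2 < w p.1).image
    fun p => ((p.1 : ℕ), (w p.2 : ℕ))

/-- A standard balanced tableau on a diagram `D`: a bijective filling of the cells of `D`
by `1, …, |D|` such that for every cell, the number of larger entries to its right in its
row equals the number of smaller entries above it in its column. -/
def IsSBT (D : Finset (ℕ × ℕ)) (T : ℕ × ℕ → ℕ) : Prop :=
  Set.InjOn T ↑D ∧ D.image T = Finset.Icc 1 D.card ∧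
  ∀ x ∈ D, (D.filter fun y => y.1 = x.1 ∧ x.2 < y.2 ∧ T x < T y).card
    = (D.filter fun y => y.2 = x.2 ∧ x.1 < y.1 ∧ T y < T x).card

lemma rothe_inv (n : ℕ) (w : Equiv.Perm (Fin n)) :
    RotheD n w⁻¹ = (RotheD n w).image Prod.swap := by
  ext ⟨a, b⟩
  simp only [RotheD, Finset.mem_image, Finset.mem_filter, Finset.mem_univ, true_and,
    Prod.exists, Prod.swap_prod_mk, Prod.mk.injEq]
  constructor
  · rintro ⟨i, j, ⟨hij, hw⟩, ha, hb⟩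
    exact ⟨b, a, ⟨w⁻¹ j, w⁻¹ i, ⟨hw, by simpa using hij⟩, by simpa using hb,
      by simpa using ha⟩, rfl, rfl⟩
  · rintro ⟨a1, b1, ⟨i, j, ⟨hij, hw⟩, h1, h2⟩, rfl, rfl⟩
    exact ⟨w j, w i, ⟨hw, by simpa using hij⟩, by simpa using h2, by simpa using h1⟩

lemma sbt_bounds {D : Finset (ℕ × ℕ)} {T : ℕ × ℕ → ℕ} (h : IsSBT D T)
    {x : ℕ × ℕ} (hx : x ∈ D) : 1 ≤ T x ∧ T x ≤ D.card := by
  have : T x ∈ D.image T := Finset.mem_image_of_mem T hx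
  rw [h.2.1, Finset.mem_Icc] at this
  exact this

lemma sbt_flip {D : Finset (ℕ × ℕ)} {T : ℕ × ℕ → ℕ} (h : IsSBT D T) :
    IsSBT (D.image Prod.swap) (fun p => D.card + 1 - T p.swap) := by
  have hcard : (D.image Prod.swap).card = D.card :=
    Finset.card_image_of_injective _ Prod.swap_injective
  have memswap : ∀ p : ℕ × ℕ, p ∈ D.image Prod.swap ↔ p.swap ∈ D := by
    intro p
    simp only [Finset.mem_image]
    constructor
    · rintro ⟨q, hq, rfl⟩; simpa using hq
    · intro hp; exact ⟨p.swap, hp, Prod.swap_swap p⟩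
  refine ⟨?_, ?_, ?_⟩
  · intro x hx y hy hxy
    simp only [Finset.coe_image, Set.mem_image] at hx hy
    have hx' : x.swap ∈ D := (memswap x).1 (by simpa [Finset.mem_coe, Finset.mem_image] using hx)
    have hy' : y.swap ∈ D := (memswap y).1 (by simpa [Finset.mem_coe, Finset.mem_image] using hy)
    have bx := sbt_bounds h hx'
    have by' := sbt_bounds h hy'
    have : T x.swap = T y.swap := by simp only at hxy; omega
    have := h.1 hx' hy' this
    calc x = x.swap.swap := (Prod.swap_swap x).symm
      _ = y.swap.swap := by rw [this]
      _ = y := Prod.swap_swap y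
  · rw [hcard, Finset.image_image]
    have : (fun p => D.card + 1 - T p.swap) ∘ Prod.swap = fun u => D.card + 1 - T u := by
      funext u; simp
    rw [this]
    have : (D.image fun u => D.card + 1 - T u)
        = (D.image T).image (fun a => D.card + 1 - a) := by
      rw [Finset.image_image]; rfl
    rw [this, h.2.1]
    ext b
    simp only [Finset.mem_image, Finset.mem_Icc]
    constructor
    · rintro ⟨a, ha, rfl⟩; omega
    · intro hb; exact ⟨D.card + 1 - b, by omega, by omega⟩
  · intro x hx
    have hz : x.swap ∈ D := (memswap x).1 hx
    have key := h.2.2 x.swap hz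
    rw [Finset.filter_image, Finset.filter_image,
      Finset.card_image_of_injective _ Prod.swap_injective,
      Finset.card_image_of_injective _ Prod.swap_injective]
    have e1 : D.filter (fun u => (Prod.swap u).1 = x.1 ∧ x.2 < (Prod.swap u).2 ∧
          D.card + 1 - T x.swap < D.card + 1 - T (Prod.swap u).swap)
        = D.filter (fun y => y.2 = x.swap.2 ∧ x.swap.1 < y.1 ∧ T y < T x.swap) := by
      apply Finset.filter_congr
      intro u hu
      have b1 := sbt_bounds h hu
      have b2 := sbt_bounds h hz
      simp only [Prod.swap_swap, Prod.fst_swap, Prod.snd_swap]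
      constructor
      · rintro ⟨h1, h2, h3⟩; exact ⟨h1, h2, by omega⟩
      · rintro ⟨h1, h2, h3⟩; exact ⟨h1, h2, by omega⟩
    have e2 : D.filter (fun u => (Prod.swap u).2 = x.2 ∧ x.1 < (Prod.swap u).1 ∧
          D.card + 1 - T (Prod.swap u).swap < D.card + 1 - T x.swap)
        = D.filter (fun y => y.1 = x.swap.1 ∧ x.swap.2 < y.2 ∧ T x.swap < T y) := by
      apply Finset.filter_congr
      intro u hu
      have b1 := sbt_bounds h hu
      have b2 := sbt_bounds h hz
      simp only [Prod.swap_swap, Prod.fst_swap, Prod.snd_swap]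
      constructor
      · rintro ⟨h1, h2, h3⟩; exact ⟨h1, h2, by omega⟩
      · rintro ⟨h1, h2, h3⟩; exact ⟨h1, h2, by omega⟩
    calc (D.filter fun u => (Prod.swap u).1 = x.1 ∧ x.2 < (Prod.swap u).2 ∧
            D.card + 1 - T x.swap < D.card + 1 - T (Prod.swap u).swap).card
        = (D.filter fun y => y.2 = x.swap.2 ∧ x.swap.1 < y.1 ∧ T y < T x.swap).card := by
          rw [e1]
      _ = (D.filter fun y => y.1 = x.swap.1 ∧ x.swap.2 < y.2 ∧ T x.swap < T y).card := key.symm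
      _ = _ := by rw [← e2]

theorem flip_bijection (n : ℕ) (w : Equiv.Perm (Fin n)) :
    (∀ T : ℕ × ℕ → ℕ, IsSBT (RotheD n w) T →
      IsSBT (RotheD n w⁻¹) (fun p => (RotheD n w).card + 1 - T (p.2, p.1))) ∧
    (∀ T : ℕ × ℕ → ℕ, IsSBT (RotheD n w) T → ∀ x ∈ RotheD n w,
      (RotheD n w⁻¹).card + 1 - ((RotheD n w).card + 1 - T ((x.2, x.1).2, (x.2, x.1).1))
        = T x) ∧
    (∀ S : ℕ × ℕ → ℕ, IsSBT (RotheD n w⁻¹) S → ∃ T : ℕ × ℕ → ℕ,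
      IsSBT (RotheD n w) T ∧
      ∀ y ∈ RotheD n w⁻¹, S y = (RotheD n w).card + 1 - T (y.2, y.1)) := by
  have hcard : (RotheD n w⁻¹).card = (RotheD n w).card := by
    rw [rothe_inv]; exact Finset.card_image_of_injective _ Prod.swap_injective
  refine ⟨?_, ?_, ?_⟩
  · intro T hT
    rw [rothe_inv]
    exact sbt_flip hT
  · intro T hT x hx
    have := sbt_bounds hT hx
    have hxx : T ((x.2, x.1).2, (x.2, x.1).1) = T x := by
      congr 1
    rw [hxx, hcard]
    omega
  · intro S hS
    refine ⟨fun p => (RotheD n w⁻¹).card + 1 - S (p.2, p.1), ?_, ?_⟩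
    · have := sbt_flip hS
      rw [← rothe_inv, inv_inv] at this
      exact this
    · intro y hy
      have := sbt_bounds hS hy
      have hyy : S ((y.2, y.1).2, (y.2, y.1).1) = S y := by congr 1
      simp only [hyy, hcard]
      omega
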